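/- For every k ≥ 3 there is a constant c_k > 0 such that for all sufficiently large n ∈ ℕ there exists a finite sequence of real numbers of length at least e_{k−2}(c_k·n) that contains no E_k-indiscernible subsequence of length n. In particular, the Ramsey number R_{E_k}(n) (the least N such that every sequence of reals of length N contains an E_k-indiscernible subsequence of length n) satisfies R_{E_k}(n) ≥ e_{k−2}(c_k·n) for all sufficiently large n. -/

import Mathlib

/-- A finite sequence `a` is `E`-indiscernible for a `k`-ary relation `E` if `E` holds on all
increasing `k`-tuples from the sequence, or fails on all of them. -/
def IsIndiscernible {X : Type*} {k m : ℕ} (E : (Fin k → X) → Prop) (a : Fin m → X) : Prop :=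
  (∀ s : Fin k → Fin m, StrictMono s → E (a ∘ s)) ∨
  (∀ s : Fin k → Fin m, StrictMono s → ¬ E (a ∘ s))

/-- The iterated exponential: `e₀(x) = x`, `e_{n+1}(x) = 2^(e_n(x))`. -/
noncomputable def eTower : ℕ → ℝ → ℝ
  | 0, x => x
  | n + 1, x => (2 : ℝ) ^ (eTower n x)

/-- Base-2 logarithm, set to `0` on nonpositive reals. -/
noncomputable def log2' (t : ℝ) : ℝ := if t ≤ 0 then 0 else Real.logb 2 t

/-- Auxiliary form of the relations `E_k` from the paper, on `ℕ`-indexed tuples of reals;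
`EAux k x` only depends on the first `k + 3` coordinates of `x` and represents the
`(k+3)`-ary relation `E_{k+3}`. -/
def EAux : ℕ → (ℕ → ℝ) → Prop
  | 0, x => 0 ≤ x 0 + x 2 - 2 * x 1
  | k + 1, x =>
      ((∀ i < k + 2, x (i + 1) - x i < x (i + 2) - x (i + 1)) ∧
        EAux k fun j => log2' (x (j + 1) - x j)) ∨
      ((∀ i < k + 2, x (i + 2) - x (i + 1) < x (i + 1) - x i) ∧
        EAux k fun j => log2' (x (k + 3 - j) - x (k + 2 - j))) ∨
      (x 1 - x 0 < x 2 - x 1 ∧ x 3 - x 2 < x 2 - x 1)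

/-- The `(k+3)`-ary relation `E_{k+3}` on ℝ. -/
def ERel (k : ℕ) : (Fin (k + 3) → ℝ) → Prop :=
  fun x => EAux k fun i => if h : i < k + 3 then x ⟨i, h⟩ else 0


open Finset

/-- `EAux k` only depends on the first `k+3` coordinates. -/
theorem eaux_congr : ∀ (k : ℕ) {x y : ℕ → ℝ}, (∀ j < k + 3, x j = y j) → (EAux k x ↔ EAux k y) := by
  intro k
  induction k with
  | zero =>
    intro x y h
    simp only [EAux]
    rw [h 0 (by norm_num), h 1 (by norm_num), h 2 (by norm_num)]
  | succ k ih =>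
    intro x y h
    have hx : ∀ j < k + 4, x j = y j := h
    simp only [EAux]
    have h1 : (∀ i < k + 2, x (i + 1) - x i < x (i + 2) - x (i + 1)) ↔
        (∀ i < k + 2, y (i + 1) - y i < y (i + 2) - y (i + 1)) := by
      apply forall_congr'; intro i; apply imp_congr_right; intro hi
      rw [hx i (by omega), hx (i+1) (by omega), hx (i+2) (by omega)]
    have h2 : (∀ i < k + 2, x (i + 2) - x (i + 1) < x (i + 1) - x i) ↔
        (∀ i < k + 2, y (i + 2) - y (i + 1) < y (i + 1) - y i) := by
      apply forall_congr'; intro i; apply imp_congr_right; intro hi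
      rw [hx i (by omega), hx (i+1) (by omega), hx (i+2) (by omega)]
    have h3 : (EAux k fun j => log2' (x (j + 1) - x j)) ↔
        (EAux k fun j => log2' (y (j + 1) - y j)) := by
      apply ih; intro j hj
      rw [hx j (by omega), hx (j+1) (by omega)]
    have h4 : (EAux k fun j => log2' (x (k + 3 - j) - x (k + 2 - j))) ↔
        (EAux k fun j => log2' (y (k + 3 - j) - y (k + 2 - j))) := by
      apply ih; intro j hj
      rw [hx (k+3-j) (by omega), hx (k+2-j) (by omega)]
    rw [h1, h2, h3, h4, hx 0 (by omega), hx 1 (by omega), hx 2 (by omega), hx 3 (by omega)]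

/-- `EAux k` is invariant under shifting all coordinates. -/
theorem eaux_shift : ∀ (k : ℕ) (x : ℕ → ℝ) (c : ℝ), (EAux k fun j => x j + c) ↔ EAux k x := by
  intro k
  induction k with
  | zero => intro x c; simp only [EAux]; constructor <;> intro h <;> linarith
  | succ k ih =>
    intro x c
    simp only [EAux, add_sub_add_right_eq_sub]


/-- top differing bit -/
def dlt (x y : ℕ) : ℕ := Nat.log2 (x ^^^ y)

lemma testBit_log2_self {z : ℕ} (hz : z ≠ 0) : z.testBit z.log2 = true := by
  have h1 : 2 ^ z.log2 ≤ z := (Nat.le_log2 hz).1 le_rfl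
  have h2 : z < 2 ^ (z.log2 + 1) := (Nat.log2_lt hz).1 (Nat.lt_succ_self _)
  have hdiv : z / 2 ^ z.log2 = 1 := by
    have hpos : 0 < 2 ^ z.log2 := Nat.pow_pos (by norm_num)
    have : z / 2 ^ z.log2 < 2 := by
      rw [Nat.div_lt_iff_lt_mul hpos]; rw [pow_succ] at h2; omega
    have : 1 ≤ z / 2 ^ z.log2 := (Nat.one_le_div_iff hpos).2 h1
    omega
  rw [Nat.testBit_eq_decide_div_mod_eq, hdiv]
  decide

lemma lt_two_pow_of_high_bits {n p : ℕ} (h : ∀ i, p ≤ i → n.testBit i = false) : n < 2 ^ p := by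
  by_contra hn
  push_neg at hn
  have hne : n ≠ 0 := by have := Nat.pow_pos (n := p) (show 0 < 2 by norm_num); omega
  have hlog : p ≤ n.log2 := (Nat.le_log2 hne).2 hn
  have := testBit_log2_self hne
  rw [h _ hlog] at this; exact Bool.noConfusion this

/-- bits above the top differing bit agree -/
lemma testBit_agree {x y t : ℕ} (hne : x ≠ y) (ht : dlt x y < t) : x.testBit t = y.testBit t := by
  have hz : x ^^^ y ≠ 0 := Nat.xor_ne_zero_iff.2 hne
  have : (x ^^^ y) < 2 ^ t := (Nat.log2_lt hz).1 ht
  have hb : (x ^^^ y).testBit t = false := Nat.testBit_eq_false_of_lt this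
  rw [Nat.testBit_xor] at hb
  cases hx : x.testBit t <;> cases hy : y.testBit t <;> simp [hx, hy] at hb ⊢ <;> rfl

lemma testBit_dlt_ne {x y : ℕ} (hne : x ≠ y) : x.testBit (dlt x y) ≠ y.testBit (dlt x y) := by
  have hz : x ^^^ y ≠ 0 := Nat.xor_ne_zero_iff.2 hne
  have h0 := testBit_log2_self hz
  rw [Nat.testBit_xor] at h0
  intro h
  unfold dlt at h
  rw [h] at h0
  simp at h0

/-- for `x < y`, `y` owns the top differing bit. -/
lemma testBit_dlt_of_lt {x y : ℕ} (hxy : x < y) :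
    x.testBit (dlt x y) = false ∧ y.testBit (dlt x y) = true := by
  have hne : x ≠ y := Nat.ne_of_lt hxy
  have hd := testBit_dlt_ne hne
  cases hx : x.testBit (dlt x y) <;> cases hy : y.testBit (dlt x y)
  · rw [hx, hy] at hd; exact absurd rfl hd
  · exact ⟨rfl, rfl⟩
  · -- x has the bit, y doesn't: then y < x, contradiction
    exfalso
    have : y < x := Nat.lt_of_testBit (dlt x y) hy hx
      (fun j hj => (testBit_agree hne hj).symm)
    omega
  · rw [hx, hy] at hd; exact absurd rfl hd

lemma dlt_comm (x y : ℕ) : dlt x y = dlt y x := by unfold dlt; rw [Nat.xor_comm]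

lemma dlt_eq_of {x z q : ℕ} (hagree : ∀ t, q < t → x.testBit t = z.testBit t)
    (hx : x.testBit q = false) (hz : z.testBit q = true) : dlt x z = q := by
  have hbit : (x ^^^ z).testBit q = true := by rw [Nat.testBit_xor, hx, hz]; rfl
  have hne : x ^^^ z ≠ 0 := by intro h; rw [h] at hbit; simp at hbit
  have hge : 2 ^ q ≤ x ^^^ z := by
    by_contra h; push_neg at h
    rw [Nat.testBit_eq_false_of_lt h] at hbit; exact Bool.noConfusion hbit
  have hlt : x ^^^ z < 2 ^ (q + 1) := by
    apply lt_two_pow_of_high_bits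
    intro i hi
    rw [Nat.testBit_xor, hagree i (by omega)]
    simp
  have h1 : q ≤ (x ^^^ z).log2 := (Nat.le_log2 hne).2 hge
  have h2 : (x ^^^ z).log2 < q + 1 := (Nat.log2_lt hne).2 hlt
  unfold dlt; omega

lemma dlt_ne {x y z : ℕ} (h1 : x < y) (h2 : y < z) : dlt x y ≠ dlt y z := by
  intro h
  have a1 := (testBit_dlt_of_lt h1).2
  have a2 := (testBit_dlt_of_lt h2).1
  rw [h] at a1
  rw [a1] at a2
  exact Bool.noConfusion a2

lemma dlt_max {x y z : ℕ} (h1 : x < y) (h2 : y < z) :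
    dlt x z = max (dlt x y) (dlt y z) := by
  have hxy : x ≠ y := Nat.ne_of_lt h1
  have hyz : y ≠ z := Nat.ne_of_lt h2
  rcases Nat.lt_or_ge (dlt x y) (dlt y z) with h | h
  · rw [max_eq_right (le_of_lt h)]
    apply dlt_eq_of
    · intro t ht
      rw [testBit_agree hxy (by omega), testBit_agree hyz (by omega)]
    · rw [testBit_agree hxy h]; exact (testBit_dlt_of_lt h2).1
    · exact (testBit_dlt_of_lt h2).2
  · have hne := dlt_ne h1 h2
    have h' : dlt y z < dlt x y := lt_of_le_of_ne h (fun e => hne e.symm)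
    rw [max_eq_left h]
    apply dlt_eq_of
    · intro t ht
      rw [testBit_agree hxy (by omega), testBit_agree hyz (by omega)]
    · exact (testBit_dlt_of_lt h1).1
    · rw [← testBit_agree hyz h']; exact (testBit_dlt_of_lt h1).2

lemma dlt_lt_of_lt {x y m : ℕ} (hne : x ≠ y) (hx : x < 2 ^ m) (hy : y < 2 ^ m) : dlt x y < m := by
  have hz : x ^^^ y ≠ 0 := Nat.xor_ne_zero_iff.2 hne
  exact (Nat.log2_lt hz).2 (Nat.xor_lt_two_pow hx hy)


noncomputable def sumW (w : ℕ → ℝ) (i : ℕ) : ℝ :=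
  ∑ t ∈ Finset.range i, if i.testBit t then w t else 0

section
variable {w : ℕ → ℝ} (hw : ∀ t, 0 < w t) (hr : ∀ t, 4 * w t ≤ w (t + 1))

include hw hr in
lemma w_ratio_le {s t : ℕ} (h : s < t) : 4 * w s ≤ w t := by
  induction t with
  | zero => omega
  | succ t ih =>
    rcases Nat.lt_or_ge s t with h' | h'
    · have := hr t; have := hw t; have := ih h'; linarith
    · have : s = t := by omega
      subst this; exact hr s

include hw hr in
lemma w_mono {s t : ℕ} (h : s ≤ t) : w s ≤ w t := by
  rcases Nat.lt_or_ge s t with h' | h'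
  · have := w_ratio_le hw hr h'; have := hw s; linarith
  · have : s = t := by omega
    subst this; exact le_rfl

include hw hr in
lemma geo_bound : ∀ p : ℕ, 3 * (∑ t ∈ Finset.range p, w t) ≤ w p := by
  intro p
  induction p with
  | zero => simp; linarith [hw 0]
  | succ p ih =>
    rw [Finset.sum_range_succ]
    have := hr p
    linarith

lemma sumW_stable (w : ℕ → ℝ) {i R : ℕ} (h : i ≤ R) :
    sumW w i = ∑ t ∈ Finset.range R, if i.testBit t then w t else 0 := by
  unfold sumW
  apply Finset.sum_subset (Finset.range_subset_range.2 h)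
  intro t ht hnt
  simp only [Finset.mem_range, not_lt] at hnt
  have : i < 2 ^ t := lt_of_le_of_lt hnt (Nat.lt_two_pow_self (n := t))
  rw [Nat.testBit_eq_false_of_lt this]
  simp

include hw hr in
/-- key bounds: `2 w_δ ≤ 3 (S y − S x) ≤ 4 w_δ` for `x < y`. -/
lemma sumW_diff_bounds {x y : ℕ} (hxy : x < y) :
    2 * w (dlt x y) ≤ 3 * (sumW w y - sumW w x) ∧
    3 * (sumW w y - sumW w x) ≤ 4 * w (dlt x y) := by
  set p := dlt x y with hp
  set R := max (p + 1) y with hR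
  have hxR : x ≤ R := by omega
  have hyR : y ≤ R := by omega
  have hne : x ≠ y := Nat.ne_of_lt hxy
  set g : ℕ → ℝ := fun t => (if y.testBit t then w t else 0) - (if x.testBit t then w t else 0)
    with hg
  have hdiff : sumW w y - sumW w x = ∑ t ∈ Finset.range R, g t := by
    rw [sumW_stable w hxR, sumW_stable w hyR, ← Finset.sum_sub_distrib]
  have hzero : ∀ t, p < t → g t = 0 := by
    intro t ht
    simp only [hg, testBit_agree hne ht, sub_self]
  have hsplit : ∑ t ∈ Finset.range R, g t = (∑ t ∈ Finset.range p, g t) + g p := by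
    rw [show (∑ t ∈ Finset.range R, g t) = ∑ t ∈ Finset.range (p+1), g t from
      (Finset.sum_subset (Finset.range_subset_range.2 (by omega)) (fun t _ ht => by
        simp only [Finset.mem_range, not_lt] at ht
        exact hzero t (by omega))).symm]
    rw [Finset.sum_range_succ]
  have hgp : g p = w p := by
    obtain ⟨hx0, hy1⟩ := testBit_dlt_of_lt hxy
    rw [← hp] at hx0 hy1
    simp [hg, hx0, hy1]
  have habs : |∑ t ∈ Finset.range p, g t| ≤ ∑ t ∈ Finset.range p, w t := by
    calc |∑ t ∈ Finset.range p, g t| ≤ ∑ t ∈ Finset.range p, |g t| :=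
          Finset.abs_sum_le_sum_abs _ _
      _ ≤ ∑ t ∈ Finset.range p, w t := by
          apply Finset.sum_le_sum
          intro t _
          have := hw t
          apply abs_le.mpr
          constructor <;> (simp only [hg]; split_ifs <;> linarith)
  have hgeo := geo_bound hw hr p
  have h3 : |3 * ∑ t ∈ Finset.range p, g t| ≤ w p := by
    rw [abs_mul]
    rw [abs_of_nonneg (by norm_num : (0:ℝ) ≤ 3)]
    nlinarith [habs, abs_nonneg (∑ t ∈ Finset.range p, g t)]
  rw [hdiff, hsplit, hgp]
  constructor
  · have := abs_le.1 h3; linarith [this.1]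
  · have := abs_le.1 h3; linarith [this.2]

include hw hr in
/-- comparison of adjacent differences with margin. -/
lemma sumW_cmp {x y z : ℕ} (h1 : x < y) (h2 : y < z) (hlt : dlt x y < dlt y z) :
    (sumW w y - sumW w x) + w (dlt y z) / 3 ≤ (sumW w z - sumW w y) := by
  obtain ⟨hb1, hb2⟩ := sumW_diff_bounds hw hr h1
  obtain ⟨hb3, hb4⟩ := sumW_diff_bounds hw hr h2
  have hmono : 4 * w (dlt x y) ≤ w (dlt y z) := w_ratio_le hw hr hlt
  linarith

include hw hr in
lemma sumW_cmp' {x y z : ℕ} (h1 : x < y) (h2 : y < z) (hlt : dlt y z < dlt x y) :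
    (sumW w z - sumW w y) + w (dlt x y) / 3 ≤ (sumW w y - sumW w x) := by
  obtain ⟨hb1, hb2⟩ := sumW_diff_bounds hw hr h1
  obtain ⟨hb3, hb4⟩ := sumW_diff_bounds hw hr h2
  have hmono : 4 * w (dlt y z) ≤ w (dlt x y) := w_ratio_le hw hr hlt
  linarith
end


def GInv (k : ℕ) (b : ℕ → ℝ) : Prop :=
  (∀ i, b i + 2 ≤ b (i + 1)) ∧ 2 ≤ b 0 ∧
  ∀ q : ℕ → ℕ, (∀ j, j + 1 < k + 3 → q j < q (j + 1)) →
    ∀ y : ℕ → ℝ, (∀ j < k + 3, |y j - b (q j)| < 1) → (EAux k y ↔ EAux k (b ∘ q))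

noncomputable def wexp (b : ℕ → ℝ) : ℕ → ℝ := fun t => (2 : ℝ) ^ (b t)

noncomputable def Afun (b : ℕ → ℝ) : ℕ → ℝ := fun i => 2 + 16 * sumW (wexp b) i

section
variable {k : ℕ} {b : ℕ → ℝ} (hInv : GInv k b)

include hInv in
lemma b_mono_le {s t : ℕ} (h : s ≤ t) : b s ≤ b t := by
  induction t with
  | zero =>
    have hs : s = 0 := by omega
    subst hs; exact le_rfl
  | succ t ih =>
    rcases Nat.lt_or_ge s (t+1) with h' | h'
    · have h2 := ih (by omega)
      have := hInv.1 t
      linarith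
    · have : s = t + 1 := by omega
      subst this; exact le_rfl

include hInv in
lemma b_ge_two (t : ℕ) : 2 ≤ b t := le_trans hInv.2.1 (b_mono_le hInv (Nat.zero_le t))

include hInv in
lemma wexp_pos (t : ℕ) : 0 < wexp b t := Real.rpow_pos_of_pos (by norm_num) _

include hInv in
lemma wexp_ratio (t : ℕ) : 4 * wexp b t ≤ wexp b (t + 1) := by
  have h : b t + 2 ≤ b (t + 1) := hInv.1 t
  have : (4 : ℝ) * (2 : ℝ) ^ (b t) = (2 : ℝ) ^ (b t + 2) := by
    rw [Real.rpow_add (by norm_num)]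
    have : (2:ℝ) ^ (2:ℝ) = 4 := by
      rw [show (2:ℝ) = ((2:ℕ):ℝ) by norm_num, Real.rpow_natCast]; norm_num
    rw [this]; ring
  unfold wexp
  rw [this]
  exact Real.rpow_le_rpow_of_exponent_le (by norm_num) h

include hInv in
lemma wexp_ge_four (t : ℕ) : 4 ≤ wexp b t := by
  have h : (2:ℝ) ≤ b t := b_ge_two hInv t
  have : (4:ℝ) = (2:ℝ) ^ (2:ℝ) := by
    rw [show (2:ℝ) = ((2:ℕ):ℝ) by norm_num, Real.rpow_natCast]; norm_num
  rw [this]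
  exact Real.rpow_le_rpow_of_exponent_le (by norm_num) h

lemma log_close {β D : ℝ} (h1 : (2:ℝ) ^ (β + 3) < D) (h2 : D < (2:ℝ) ^ (β + 5)) :
    |log2' D - (β + 4)| < 1 := by
  have hD : 0 < D := lt_trans (Real.rpow_pos_of_pos (by norm_num) _) h1
  have hlog : log2' D = Real.logb 2 D := by unfold log2'; rw [if_neg (by linarith)]
  have hu : Real.logb 2 D < β + 5 := (Real.logb_lt_iff_lt_rpow (by norm_num) hD).2 h2
  have hl : β + 3 < Real.logb 2 D := (Real.lt_logb_iff_rpow_lt (by norm_num) hD).2 h1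
  rw [hlog, abs_lt]
  constructor <;> linarith

include hInv in
/-- if `D` is within 2 of `16·(S y − S x)` then its log is within 1 of `b (dlt x y) + 4`. -/
lemma log_diff_close {x y : ℕ} (hxy : x < y) {D : ℝ}
    (hD : |D - 16 * (sumW (wexp b) y - sumW (wexp b) x)| ≤ 2) :
    |log2' D - (b (dlt x y) + 4)| < 1 := by
  set β := b (dlt x y)
  set W := wexp b (dlt x y) with hW
  have hW4 : 4 ≤ W := wexp_ge_four hInv _
  obtain ⟨hb1, hb2⟩ := sumW_diff_bounds (wexp_pos hInv) (wexp_ratio hInv) hxy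
  have habs := abs_le.1 hD
  have hWrw : W = (2:ℝ) ^ β := rfl
  have h8 : (2:ℝ) ^ (β + 3) = 8 * W := by
    rw [hWrw, Real.rpow_add (by norm_num)]
    have : (2:ℝ) ^ (3:ℝ) = 8 := by
      rw [show (3:ℝ) = ((3:ℕ):ℝ) by norm_num, Real.rpow_natCast]; norm_num
    rw [this]; ring
  have h32 : (2:ℝ) ^ (β + 5) = 32 * W := by
    rw [hWrw, Real.rpow_add (by norm_num)]
    have : (2:ℝ) ^ (5:ℝ) = 32 := by
      rw [show (5:ℝ) = ((5:ℕ):ℝ) by norm_num, Real.rpow_natCast]; norm_num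
    rw [this]; ring
  apply log_close
  · rw [h8]; nlinarith
  · rw [h32]; nlinarith

include hInv in
/-- robustness against tuples shifted by 4. -/
lemma rob4 {q : ℕ → ℕ} (hq : ∀ j, j + 1 < k + 3 → q j < q (j + 1)) {y : ℕ → ℝ}
    (hy : ∀ j < k + 3, |y j - (b (q j) + 4)| < 1) : EAux k y ↔ EAux k (b ∘ q) := by
  have e : (fun j => (y j - 4) + 4) = y := funext fun j => by ring
  have h1 := eaux_shift k (fun j => y j - 4) 4
  rw [e] at h1
  rw [h1]
  apply hInv.2.2 q hq
  intro j hj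
  have := hy j hj
  rw [abs_lt] at this ⊢
  constructor <;> [linarith [this.1]; linarith [this.2]]

end


section
variable {k : ℕ} {b : ℕ → ℝ} (hInv : GInv k b)

set_option maxHeartbeats 1000000 in
include hInv in
theorem inv_step : GInv (k + 1) (Afun b) := by
  have hw := wexp_pos hInv
  have hr := wexp_ratio hInv
  have hw4 := wexp_ge_four hInv
  refine ⟨?_, ?_, ?_⟩
  · -- gaps
    intro i
    have h := (sumW_diff_bounds hw hr (Nat.lt_succ_self i)).1
    have h4 := hw4 (dlt i (i + 1))
    unfold Afun
    nlinarith
  · -- value at 0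
    unfold Afun sumW
    simp
  · -- robustness
    intro q hq y hy
    set S := sumW (wexp b) with hS
    set A := Afun b with hA
    have hqm : ∀ i, i + 1 < k + 4 → q i < q (i + 1) := fun i h => hq i (by omega)
    set p : ℕ → ℕ := fun i => dlt (q i) (q (i + 1)) with hp
    set D : ℕ → ℝ := fun i => A (q (i + 1)) - A (q i) with hD
    have hDval : ∀ i, D i = 16 * (S (q (i + 1)) - S (q i)) := by
      intro i; simp only [hD, hA, hS, Afun]; ring
    have hDlb : ∀ i, i + 1 < k + 4 → (32 / 3) * wexp b (p i) ≤ D i := by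
      intro i hi
      have h := (sumW_diff_bounds hw hr (hqm i hi)).1
      rw [hDval i]; simp only [hp, hS]; linarith
    have hp_ne : ∀ i, i + 2 < k + 4 → p i ≠ p (i + 1) := by
      intro i hi
      exact dlt_ne (hqm i (by omega)) (hqm (i + 1) (by omega))
    have hcmp : ∀ i, i + 2 < k + 4 → p i < p (i + 1) → D i + 4 < D (i + 1) := by
      intro i hi hlt
      have h := sumW_cmp hw hr (hqm i (by omega)) (hqm (i + 1) (by omega)) hlt
      have h4 := hw4 (p (i + 1))
      rw [hDval i, hDval (i + 1)]
      simp only [hp, hS] at h h4 ⊢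
      nlinarith
    have hcmp' : ∀ i, i + 2 < k + 4 → p (i + 1) < p i → D (i + 1) + 4 < D i := by
      intro i hi hlt
      have h := sumW_cmp' hw hr (hqm i (by omega)) (hqm (i + 1) (by omega)) hlt
      have h4 := hw4 (p i)
      rw [hDval i, hDval (i + 1)]
      simp only [hp, hS] at h h4 ⊢
      nlinarith
    have hE : ∀ i, i + 1 < k + 4 → |(y (i + 1) - y i) - D i| < 2 := by
      intro i hi
      have h1 := hy i (by omega)
      have h2 := hy (i + 1) (by omega)
      simp only [hD]
      rw [abs_lt] at h1 h2 ⊢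
      have : (Afun b ∘ q) i = A (q i) := rfl
      constructor <;>
      · try simp only [Function.comp_apply] at h1 h2
        try simp only [hA]
        linarith [h1.1, h1.2, h2.1, h2.2]
    -- key comparisons
    have key1 : ∀ i, i + 2 < k + 4 →
        ((y (i + 1) - y i < y (i + 2) - y (i + 1)) ↔ p i < p (i + 1)) := by
      intro i hi
      rcases Nat.lt_or_ge (p i) (p (i + 1)) with h | h
      · have := hcmp i hi h
        have e1 := abs_lt.1 (hE i (by omega))
        have e2 := abs_lt.1 (hE (i + 1) (by omega))
        constructor
        · intro; exact h
        · intro; linarith [e1.1, e1.2, e2.1, e2.2]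
      · have h' : p (i + 1) < p i := lt_of_le_of_ne h (fun e => hp_ne i hi e.symm)
        have := hcmp' i hi h'
        have e1 := abs_lt.1 (hE i (by omega))
        have e2 := abs_lt.1 (hE (i + 1) (by omega))
        constructor
        · intro hcon; exfalso; linarith [e1.1, e1.2, e2.1, e2.2]
        · intro hcon; omega
    have key1' : ∀ i, i + 2 < k + 4 →
        ((y (i + 2) - y (i + 1) < y (i + 1) - y i) ↔ p (i + 1) < p i) := by
      intro i hi
      rcases Nat.lt_or_ge (p (i + 1)) (p i) with h | h
      · have := hcmp' i hi h
        have e1 := abs_lt.1 (hE i (by omega))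
        have e2 := abs_lt.1 (hE (i + 1) (by omega))
        constructor
        · intro; exact h
        · intro; linarith [e1.1, e1.2, e2.1, e2.2]
      · have h' : p i < p (i + 1) := lt_of_le_of_ne h (hp_ne i hi)
        have := hcmp i hi h'
        have e1 := abs_lt.1 (hE i (by omega))
        have e2 := abs_lt.1 (hE (i + 1) (by omega))
        constructor
        · intro hcon; exfalso; linarith [e1.1, e1.2, e2.1, e2.2]
        · intro hcon; omega
    have key2 : ∀ i, i + 2 < k + 4 →
        ((A (q (i + 1)) - A (q i) < A (q (i + 2)) - A (q (i + 1))) ↔ p i < p (i + 1)) := by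
      intro i hi
      rcases Nat.lt_or_ge (p i) (p (i + 1)) with h | h
      · have := hcmp i hi h
        simp only [hD] at this
        exact ⟨fun _ => h, fun _ => by linarith⟩
      · have h' : p (i + 1) < p i := lt_of_le_of_ne h (fun e => hp_ne i hi e.symm)
        have := hcmp' i hi h'
        simp only [hD] at this
        exact ⟨fun hcon => by exfalso; linarith, fun hcon => by omega⟩
    have key2' : ∀ i, i + 2 < k + 4 →
        ((A (q (i + 2)) - A (q (i + 1)) < A (q (i + 1)) - A (q i)) ↔ p (i + 1) < p i) := by
      intro i hi
      rcases Nat.lt_or_ge (p (i + 1)) (p i) with h | h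
      · have := hcmp' i hi h
        simp only [hD] at this
        exact ⟨fun _ => h, fun _ => by linarith⟩
      · have h' : p i < p (i + 1) := lt_of_le_of_ne h (hp_ne i hi)
        have := hcmp i hi h'
        simp only [hD] at this
        exact ⟨fun hcon => by exfalso; linarith, fun hcon => by omega⟩
    -- inner robustness: y-side logs
    have hlogy : ∀ j, j + 1 < k + 4 → |log2' (y (j + 1) - y j) - (b (p j) + 4)| < 1 := by
      intro j hj
      apply log_diff_close hInv (hqm j hj)
      have := hE j hj
      rw [hDval j] at this
      try simp only [hS, hp]
      exact le_of_lt this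
    have hlogx : ∀ j, j + 1 < k + 4 →
        |log2' (A (q (j + 1)) - A (q j)) - (b (p j) + 4)| < 1 := by
      intro j hj
      apply log_diff_close hInv (hqm j hj)
      have : A (q (j + 1)) - A (q j) = 16 * (S (q (j + 1)) - S (q j)) := hDval j
      rw [this]
      try simp only [hS]
      rw [sub_self, abs_zero]
      norm_num
    -- clause-wise equivalences
    have main1 : ((∀ i < k + 2, y (i + 1) - y i < y (i + 2) - y (i + 1)) ∧
          EAux k fun j => log2' (y (j + 1) - y j)) ↔
        ((∀ i < k + 2, (A ∘ q) (i + 1) - (A ∘ q) i < (A ∘ q) (i + 2) - (A ∘ q) (i + 1)) ∧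
          EAux k fun j => log2' ((A ∘ q) (j + 1) - (A ∘ q) j)) := by
      by_cases hP : ∀ i < k + 2, p i < p (i + 1)
      · have hy1 : ∀ i < k + 2, y (i + 1) - y i < y (i + 2) - y (i + 1) := by
          intro i hi; exact (key1 i (by omega)).2 (hP i hi)
        have hx1 : ∀ i < k + 2, (A ∘ q) (i + 1) - (A ∘ q) i < (A ∘ q) (i + 2) - (A ∘ q) (i + 1) := by
          intro i hi; exact (key2 i (by omega)).2 (hP i hi)
        have hIy : (EAux k fun j => log2' (y (j + 1) - y j)) ↔ EAux k (b ∘ p) := by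
          apply rob4 hInv
          · intro j hj; exact hP j (by omega)
          · intro j hj; exact hlogy j (by omega)
        have hIx : (EAux k fun j => log2' ((A ∘ q) (j + 1) - (A ∘ q) j)) ↔ EAux k (b ∘ p) := by
          apply rob4 hInv
          · intro j hj; exact hP j (by omega)
          · intro j hj; exact hlogx j (by omega)
        rw [hIy, hIx]
        simp only [Function.comp_apply] at hy1 hx1 ⊢
        tauto
      · have hy1 : ¬ ∀ i < k + 2, y (i + 1) - y i < y (i + 2) - y (i + 1) := by
          intro hcon; apply hP
          intro i hi; exact (key1 i (by omega)).1 (hcon i hi)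
        have hx1 : ¬ ∀ i < k + 2, (A ∘ q) (i + 1) - (A ∘ q) i < (A ∘ q) (i + 2) - (A ∘ q) (i + 1) := by
          intro hcon; apply hP
          intro i hi; exact (key2 i (by omega)).1 (hcon i hi)
        simp only [Function.comp_apply] at hy1 hx1 ⊢
        tauto
    have main2 : ((∀ i < k + 2, y (i + 2) - y (i + 1) < y (i + 1) - y i) ∧
          EAux k fun j => log2' (y (k + 3 - j) - y (k + 2 - j))) ↔
        ((∀ i < k + 2, (A ∘ q) (i + 2) - (A ∘ q) (i + 1) < (A ∘ q) (i + 1) - (A ∘ q) i) ∧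
          EAux k fun j => log2' ((A ∘ q) (k + 3 - j) - (A ∘ q) (k + 2 - j))) := by
      by_cases hP : ∀ i < k + 2, p (i + 1) < p i
      · have hy1 : ∀ i < k + 2, y (i + 2) - y (i + 1) < y (i + 1) - y i := by
          intro i hi; exact (key1' i (by omega)).2 (hP i hi)
        have hx1 : ∀ i < k + 2, (A ∘ q) (i + 2) - (A ∘ q) (i + 1) < (A ∘ q) (i + 1) - (A ∘ q) i := by
          intro i hi; exact (key2' i (by omega)).2 (hP i hi)
        have hq' : ∀ j, j + 1 < k + 3 → p (k + 2 - j) < p (k + 2 - (j + 1)) := by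
          intro j hj
          have h1 : k + 2 - (j + 1) < k + 2 := by omega
          have h2 : k + 2 - j = (k + 2 - (j + 1)) + 1 := by omega
          rw [h2]
          exact hP _ h1
        have hIy : (EAux k fun j => log2' (y (k + 3 - j) - y (k + 2 - j))) ↔
            EAux k (b ∘ fun j => p (k + 2 - j)) := by
          apply rob4 hInv hq'
          intro j hj
          have h2 : k + 3 - j = (k + 2 - j) + 1 := by omega
          rw [h2]
          exact hlogy (k + 2 - j) (by omega)
        have hIx : (EAux k fun j => log2' ((A ∘ q) (k + 3 - j) - (A ∘ q) (k + 2 - j))) ↔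
            EAux k (b ∘ fun j => p (k + 2 - j)) := by
          apply rob4 hInv hq'
          intro j hj
          have h2 : k + 3 - j = (k + 2 - j) + 1 := by omega
          rw [h2]
          exact hlogx (k + 2 - j) (by omega)
        rw [hIy, hIx]
        simp only [Function.comp_apply] at hy1 hx1 ⊢
        tauto
      · have hy1 : ¬ ∀ i < k + 2, y (i + 2) - y (i + 1) < y (i + 1) - y i := by
          intro hcon; apply hP
          intro i hi; exact (key1' i (by omega)).1 (hcon i hi)
        have hx1 : ¬ ∀ i < k + 2, (A ∘ q) (i + 2) - (A ∘ q) (i + 1) < (A ∘ q) (i + 1) - (A ∘ q) i := by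
          intro hcon; apply hP
          intro i hi; exact (key2' i (by omega)).1 (hcon i hi)
        simp only [Function.comp_apply] at hy1 hx1 ⊢
        tauto
    have main3 : (y 1 - y 0 < y 2 - y 1 ∧ y 3 - y 2 < y 2 - y 1) ↔
        ((A ∘ q) 1 - (A ∘ q) 0 < (A ∘ q) 2 - (A ∘ q) 1 ∧
          (A ∘ q) 3 - (A ∘ q) 2 < (A ∘ q) 2 - (A ∘ q) 1) := by
      have k1 := key1 0 (by omega)
      have k2 := key1' 1 (by omega)
      have k3 := key2 0 (by omega)
      have k4 := key2' 1 (by omega)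
      simp only [Function.comp_apply] at *
      constructor
      · rintro ⟨h1, h2⟩
        exact ⟨k3.2 (k1.1 h1), k4.2 (k2.1 h2)⟩
      · rintro ⟨h1, h2⟩
        exact ⟨k1.2 (k3.1 h1), k2.2 (k4.1 h2)⟩
    show (_ ∨ _ ∨ _) ↔ (_ ∨ _ ∨ _)
    exact or_congr main1 (or_congr main2 main3)
end


def Avoids (k : ℕ) (b : ℕ → ℝ) (m n : ℕ) : Prop :=
  ∀ u : ℕ → ℕ, (∀ j, j + 1 < n → u j < u (j + 1)) → (∀ j < n, u j < m) →
    (∃ s : ℕ → ℕ, (∀ j, j + 1 < k + 3 → s j < s (j + 1)) ∧ s (k + 2) < n ∧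
      EAux k (b ∘ u ∘ s)) ∧
    (∃ s : ℕ → ℕ, (∀ j, j + 1 < k + 3 → s j < s (j + 1)) ∧ s (k + 2) < n ∧
      ¬ EAux k (b ∘ u ∘ s))

lemma incr_lt {s : ℕ → ℕ} {r : ℕ} (h : ∀ j, j + 1 < r → s j < s (j + 1)) :
    ∀ i j, i < j → j < r → s i < s j := by
  intro i j hij hjr
  induction j with
  | zero => omega
  | succ j ih =>
    rcases Nat.lt_or_ge i j with h' | h'
    · have := ih h' (by omega)
      have := h j (by omega)
      omega
    · have : i = j := by omega
      subst this
      exact h i (by omega)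

lemma incr_le {s : ℕ → ℕ} {r : ℕ} (h : ∀ j, j + 1 < r → s j < s (j + 1)) :
    ∀ i j, i ≤ j → j < r → s i ≤ s j := by
  intro i j hij hjr
  rcases Nat.lt_or_ge i j with h' | h'
  · exact le_of_lt (incr_lt h i j h' hjr)
  · have : i = j := by omega
    subst this; exact le_rfl

lemma chain_inc {v : ℕ → ℕ} {α E : ℕ} (h : ∀ t, α ≤ t → t + 2 ≤ E → v t < v (t + 1)) :
    ∀ i j, α ≤ i → i < j → j + 1 ≤ E → v i < v j := by
  intro i j hαi hij hjE
  induction j with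
  | zero => omega
  | succ j ih =>
    rcases Nat.lt_or_ge i j with h' | h'
    · have h1 := ih h' (by omega)
      have h2 := h j (by omega) (by omega)
      omega
    · have : i = j := by omega
      subst this
      exact h i hαi (by omega)

lemma chain_dec {v : ℕ → ℕ} {α E : ℕ} (h : ∀ t, α ≤ t → t + 2 ≤ E → v (t + 1) < v t) :
    ∀ i j, α ≤ i → i < j → j + 1 ≤ E → v j < v i := by
  intro i j hαi hij hjE
  induction j with
  | zero => omega
  | succ j ih =>
    rcases Nat.lt_or_ge i j with h' | h'
    · have h1 := ih h' (by omega)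
      have h2 := h j (by omega) (by omega)
      omega
    · have : i = j := by omega
      subst this
      exact h i hαi (by omega)

/-- monotone run extraction: given no peaks, `v` is decreasing then increasing. -/
lemma exists_flip (v : ℕ → ℕ) (M : ℕ)
    (hne : ∀ t, t ≤ M + 1 → v t ≠ v (t + 1))
    (hnp : ∀ t, t ≤ M → ¬(v t < v (t + 1) ∧ v (t + 2) < v (t + 1))) :
    ∃ a, a ≤ M + 2 ∧ (∀ t, t < a → v (t + 1) < v t) ∧
      (∀ t, a ≤ t → t ≤ M + 1 → v t < v (t + 1)) := by
  by_cases hex : ∃ t, t ≤ M + 1 ∧ v t < v (t + 1)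
  · obtain ⟨haM, hainc⟩ := Nat.find_spec hex
    refine ⟨Nat.find hex, by omega, ?_, ?_⟩
    · intro t ht
      have hmin := Nat.find_min hex ht
      push_neg at hmin
      have h1 := hmin (by omega)
      have h2 := hne t (by omega)
      omega
    · intro t hat htM
      induction t with
      | zero =>
        have h0 : Nat.find hex = 0 := by omega
        rw [h0] at hainc
        exact hainc
      | succ t ih =>
        rcases Nat.lt_or_ge t (Nat.find hex) with h' | h'
        · have h0 : Nat.find hex = t + 1 := by omega
          rw [h0] at hainc
          exact hainc
        · have hprev := ih h' (by omega)
          have h1 := hnp t (by omega)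
          push_neg at h1
          have h2 := h1 hprev
          have h3 := hne (t + 1) (by omega)
          have e2 : v (t + 1 + 1) = v (t + 2) := rfl
          omega
  · push_neg at hex
    refine ⟨M + 2, le_rfl, ?_, ?_⟩
    · intro t ht
      have h1 := hex t (by omega)
      have h2 := hne t (by omega)
      omega
    · intro t hat htM
      omega

section
variable {k n : ℕ} {b : ℕ → ℝ} {u : ℕ → ℕ}

/-- along an increasing stretch of consecutive deltas, the delta of the endpoints is the last. -/
lemma dlt_chain_inc (hu : ∀ j, j + 1 < n → u j < u (j + 1)) :
    ∀ c a, a < c → c < n →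
      (∀ t, a ≤ t → t + 2 ≤ c → dlt (u t) (u (t + 1)) < dlt (u (t + 1)) (u (t + 2))) →
      dlt (u a) (u c) = dlt (u (c - 1)) (u c) := by
  intro c
  induction c with
  | zero => omega
  | succ c ih =>
    intro a hac hcn hrun
    rcases Nat.lt_or_ge a c with h' | h'
    · have hacn : c < n := by omega
      have h1 := ih a h' hacn (fun t ht ht2 => hrun t ht (by omega))
      have h2 : dlt (u a) (u (c + 1)) = max (dlt (u a) (u c)) (dlt (u c) (u (c + 1))) :=
        dlt_max (incr_lt hu a c h' hacn) (hu c (by omega))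
      have h3 : dlt (u (c - 1)) (u c) < dlt (u c) (u (c + 1)) := by
        have := hrun (c - 1) (by omega) (by omega)
        have e1 : c - 1 + 1 = c := by omega
        have e2 : c - 1 + 2 = c + 1 := by omega
        rw [e1, e2] at this
        exact this
      rw [h2, h1]
      simp only [Nat.add_sub_cancel]
      omega
    · have : a = c := by omega
      subst this
      simp only [Nat.add_sub_cancel]

/-- along a decreasing stretch of consecutive deltas, the delta of the endpoints is the first. -/
lemma dlt_chain_dec (hu : ∀ j, j + 1 < n → u j < u (j + 1)) :
    ∀ c a, a < c → c < n →
      (∀ t, a ≤ t → t + 2 ≤ c → dlt (u (t + 1)) (u (t + 2)) < dlt (u t) (u (t + 1))) →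
      dlt (u a) (u c) = dlt (u a) (u (a + 1)) := by
  intro c
  induction c with
  | zero => omega
  | succ c ih =>
    intro a hac hcn hrun
    rcases Nat.lt_or_ge a c with h' | h'
    · have hacn : c < n := by omega
      have h1 := ih a h' hacn (fun t ht ht2 => hrun t ht (by omega))
      have h2 : dlt (u a) (u (c + 1)) = max (dlt (u a) (u c)) (dlt (u c) (u (c + 1))) :=
        dlt_max (incr_lt hu a c h' hacn) (hu c (by omega))
      -- need dlt (u c) (u (c+1)) < dlt (u a) (u (a+1))
      have hvdec : ∀ t, a ≤ t → t + 2 ≤ c + 1 →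
          (fun t => dlt (u (t + 1)) (u (t + 2))) t < (fun t => dlt (u t) (u (t + 1))) t := hrun
      have h3 : dlt (u c) (u (c + 1)) < dlt (u a) (u (a + 1)) := by
        have := chain_dec (v := fun t => dlt (u t) (u (t + 1))) (α := a) (E := c + 1)
          (fun t ht ht2 => hrun t ht ht2) a c (le_rfl) h' (by omega)
        exact this
      rw [h2, h1]
      omega
    · have : a = c := by omega
      subst this
      rfl
end

section
variable {k : ℕ} {b : ℕ → ℝ} (hInv : GInv k b)

include hInv in
lemma afun_cmp {x y z : ℕ} (h1 : x < y) (h2 : y < z) (hlt : dlt x y < dlt y z) :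
    Afun b y - Afun b x < Afun b z - Afun b y := by
  have h := sumW_cmp (wexp_pos hInv) (wexp_ratio hInv) h1 h2 hlt
  have h4 := wexp_ge_four hInv (dlt y z)
  unfold Afun
  nlinarith

include hInv in
lemma afun_cmp' {x y z : ℕ} (h1 : x < y) (h2 : y < z) (hlt : dlt y z < dlt x y) :
    Afun b z - Afun b y < Afun b y - Afun b x := by
  have h := sumW_cmp' (wexp_pos hInv) (wexp_ratio hInv) h1 h2 hlt
  have h4 := wexp_ge_four hInv (dlt x y)
  unfold Afun
  nlinarith

include hInv in
lemma afun_log_close {x y : ℕ} (hxy : x < y) :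
    |log2' (Afun b y - Afun b x) - (b (dlt x y) + 4)| < 1 := by
  apply log_diff_close hInv hxy
  have : Afun b y - Afun b x = 16 * (sumW (wexp b) y - sumW (wexp b) x) := by
    unfold Afun; ring
  rw [this, sub_self, abs_zero]
  norm_num

include hInv in
lemma inc_case {n n₀ : ℕ} {u : ℕ → ℕ}
    (hu : ∀ j, j + 1 < n → u j < u (j + 1)) (α : ℕ) (hend : α + n₀ + 1 ≤ n)
    (hrun : ∀ t, α ≤ t → t + 2 ≤ α + n₀ → dlt (u t) (u (t + 1)) < dlt (u (t + 1)) (u (t + 2)))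
    (s : ℕ → ℕ) (hs : ∀ j, j + 1 < k + 3 → s j < s (j + 1)) (hsn : s (k + 2) < n₀) :
    ∃ pt : ℕ → ℕ, (∀ j, j + 1 < k + 4 → pt j < pt (j + 1)) ∧ pt (k + 3) < n ∧
      (EAux (k + 1) (Afun b ∘ u ∘ pt) ↔
        EAux k (b ∘ fun j => dlt (u (α + s j)) (u (α + s j + 1)))) := by
  set v : ℕ → ℕ := fun t => dlt (u t) (u (t + 1)) with hv
  have hsle : ∀ j, j ≤ k + 2 → s j ≤ s (k + 2) := fun j hj => incr_le hs j (k + 2) hj (by omega)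
  set pt : ℕ → ℕ := fun j => Nat.casesOn j α (fun i => α + s i + 1) with hpt
  set q : ℕ → ℕ := fun j => v (α + s j) with hq
  have hpt0 : pt 0 = α := rfl
  have hptS : ∀ i, pt (i + 1) = α + s i + 1 := fun i => rfl
  have hptlt : ∀ j, j + 1 < k + 4 → pt j < pt (j + 1) := by
    intro j hj
    rcases j with _ | i
    · rw [hpt0, hptS 0]; omega
    · have h3 := hs i (by omega)
      rw [hptS i, hptS (i + 1)]; omega
  have hptub : ∀ j, j < k + 4 → pt j ≤ α + n₀ := by
    intro j hj
    rcases j with _ | i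
    · rw [hpt0]; omega
    · have h3 := hsle i (by omega)
      rw [hptS i]; omega
  have hptlast : pt (k + 3) < n := by
    rw [show k + 3 = (k + 2) + 1 from rfl, hptS (k + 2)]; omega
  refine ⟨pt, hptlt, hptlast, ?_⟩
  -- deltas of the point tuple
  have hdelta : ∀ j, j + 1 < k + 4 → dlt (u (pt j)) (u (pt (j + 1))) = q j := by
    intro j hj
    have hα : α ≤ pt j := by
      rcases j with _ | i
      · rw [hpt0]
      · rw [hptS i]; omega
    have hjs : s j ≤ s (k + 2) := hsle j (by omega)
    have h := dlt_chain_inc hu (pt (j + 1)) (pt j) (hptlt j hj)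
      (by have := hptub (j + 1) (by omega); omega)
      (fun t ht ht2 => hrun t (by omega) (by have := hptS j; omega))
    rw [h, hptS j]
    simp only [hq, hv]
    have e : α + s j + 1 - 1 = α + s j := by omega
    rw [e]
  have hq_inc : ∀ j, j + 1 < k + 3 → q j < q (j + 1) := by
    intro j hj
    simp only [hq]
    apply chain_inc (α := α) (E := α + n₀) hrun
    · omega
    · have := hs j hj; omega
    · have : s (j + 1) ≤ s (k + 2) := hsle (j + 1) (by omega)
      omega
  have hp_inc : ∀ j, j + 2 < k + 4 →
      dlt (u (pt j)) (u (pt (j + 1))) < dlt (u (pt (j + 1))) (u (pt (j + 2))) := by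
    intro j hj
    rw [hdelta j (by omega), hdelta (j + 1) (by omega)]
    exact hq_inc j (by omega)
  have humono : ∀ i j, i < j → j < k + 4 → u (pt i) < u (pt j) := by
    intro i j hij hj
    apply incr_lt hu _ _ (incr_lt hptlt i j hij hj)
    have := hptub j hj
    omega
  have hd_inc : ∀ i, i < k + 2 →
      Afun b (u (pt (i + 1))) - Afun b (u (pt i)) <
        Afun b (u (pt (i + 2))) - Afun b (u (pt (i + 1))) := by
    intro i hi
    apply afun_cmp hInv (humono i (i + 1) (by omega) (by omega))
      (humono (i + 1) (i + 2) (by omega) (by omega))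
    exact hp_inc i (by omega)
  have hlog : ∀ j, j < k + 3 →
      |log2' (Afun b (u (pt (j + 1))) - Afun b (u (pt j))) - (b (q j) + 4)| < 1 := by
    intro j hj
    rw [← hdelta j (by omega)]
    exact afun_log_close hInv (humono j (j + 1) (by omega) (by omega))
  have hrob : (EAux k fun j => log2' ((Afun b ∘ u ∘ pt) (j + 1) - (Afun b ∘ u ∘ pt) j)) ↔
      EAux k (b ∘ q) := by
    apply rob4 hInv hq_inc
    intro j hj
    exact hlog j hj
  constructor
  · rintro (⟨_, hI⟩ | ⟨hC, _⟩ | hC)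
    · exact hrob.1 hI
    · exfalso
      have h0 := hC 0 (by omega)
      have h1 := hd_inc 0 (by omega)
      simp only [Function.comp_apply] at h0
      norm_num at h0 h1
      linarith
    · exfalso
      have h1 := hd_inc 1 (by omega)
      simp only [Function.comp_apply] at hC
      have := hC.2
      norm_num at h1 this
      linarith
  · intro h
    left
    constructor
    · intro i hi
      have := hd_inc i hi
      simp only [Function.comp_apply]
      exact this
    · exact hrob.2 h

include hInv in
lemma dec_case {n n₀ : ℕ} {u : ℕ → ℕ}
    (hu : ∀ j, j + 1 < n → u j < u (j + 1)) (α : ℕ) (hn₀ : 1 ≤ n₀) (hend : α + n₀ + 1 ≤ n)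
    (hrun : ∀ t, α ≤ t → t + 2 ≤ α + n₀ → dlt (u (t + 1)) (u (t + 2)) < dlt (u t) (u (t + 1)))
    (s : ℕ → ℕ) (hs : ∀ j, j + 1 < k + 3 → s j < s (j + 1)) (hsn : s (k + 2) < n₀) :
    ∃ pt : ℕ → ℕ, (∀ j, j + 1 < k + 4 → pt j < pt (j + 1)) ∧ pt (k + 3) < n ∧
      (EAux (k + 1) (Afun b ∘ u ∘ pt) ↔
        EAux k (b ∘ fun j => dlt (u (α + n₀ - 1 - s j)) (u (α + n₀ - 1 - s j + 1)))) := by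
  set v : ℕ → ℕ := fun t => dlt (u t) (u (t + 1)) with hv
  have hsle : ∀ j, j ≤ k + 2 → s j ≤ s (k + 2) := fun j hj => incr_le hs j (k + 2) hj (by omega)
  set pt : ℕ → ℕ := fun j => if j = k + 3 then α + n₀ else α + n₀ - 1 - s (k + 2 - j)
    with hpt
  set q : ℕ → ℕ := fun j => v (α + n₀ - 1 - s j) with hq
  have hptE : ∀ j, j < k + 3 → pt j = α + n₀ - 1 - s (k + 2 - j) := by
    intro j hj
    simp only [hpt]
    rw [if_neg (by omega)]
  have hptL : pt (k + 3) = α + n₀ := by simp [hpt]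
  have hptlt : ∀ j, j + 1 < k + 4 → pt j < pt (j + 1) := by
    intro j hj
    rcases Nat.lt_or_ge (j + 1) (k + 3) with h0 | h0
    · rw [hptE j (by omega), hptE (j + 1) (by omega)]
      have h1 : s (k + 2 - (j + 1)) < s (k + 2 - j) := by
        have e : k + 2 - j = (k + 2 - (j + 1)) + 1 := by omega
        rw [e]
        exact hs _ (by omega)
      have h2 : s (k + 2 - j) ≤ s (k + 2) := hsle _ (by omega)
      omega
    · have hj3 : j + 1 = k + 3 := by omega
      rw [hptE j (by omega), hj3, hptL]
      have h2 : s (k + 2 - j) ≤ s (k + 2) := hsle _ (by omega)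
      omega
  have hptlast : pt (k + 3) < n := by rw [hptL]; omega
  refine ⟨pt, hptlt, hptlast, ?_⟩
  have hptub : ∀ j, j < k + 4 → α ≤ pt j ∧ pt j ≤ α + n₀ := by
    intro j hj
    rcases Nat.lt_or_ge j (k + 3) with h0 | h0
    · rw [hptE j h0]
      have h2 : s (k + 2 - j) ≤ s (k + 2) := hsle _ (by omega)
      omega
    · have : j = k + 3 := by omega
      rw [this, hptL]
      omega
  -- deltas of the point tuple
  have hdelta : ∀ j, j + 1 < k + 4 → dlt (u (pt j)) (u (pt (j + 1))) = q (k + 2 - j) := by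
    intro j hj
    have h1 := hptlt j hj
    have h2 := (hptub j (by omega)).1
    have h3 := (hptub (j + 1) (by omega)).2
    have h := dlt_chain_dec hu (pt (j + 1)) (pt j) h1 (by omega)
      (fun t ht ht2 => hrun t (by omega) (by omega))
    rw [h, hptE j (by omega)]
  have hq_inc : ∀ j, j + 1 < k + 3 → q j < q (j + 1) := by
    intro j hj
    simp only [hq]
    have h1 : s j < s (j + 1) := hs j hj
    have h2 : s (j + 1) ≤ s (k + 2) := hsle _ (by omega)
    exact chain_dec hrun _ _ (by omega) (by omega) (by omega)
  have hp_dec : ∀ j, j + 2 < k + 4 →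
      dlt (u (pt (j + 1))) (u (pt (j + 2))) < dlt (u (pt j)) (u (pt (j + 1))) := by
    intro j hj
    rw [hdelta j (by omega), hdelta (j + 1) (by omega)]
    have e1 : k + 2 - j = (k + 2 - (j + 1)) + 1 := by omega
    rw [e1]
    exact hq_inc _ (by omega)
  have humono : ∀ i j, i < j → j < k + 4 → u (pt i) < u (pt j) := by
    intro i j hij hj
    apply incr_lt hu _ _ (incr_lt hptlt i j hij hj)
    have := (hptub j hj).2
    omega
  have hd_dec : ∀ i, i < k + 2 →
      Afun b (u (pt (i + 2))) - Afun b (u (pt (i + 1))) <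
        Afun b (u (pt (i + 1))) - Afun b (u (pt i)) := by
    intro i hi
    apply afun_cmp' hInv (humono i (i + 1) (by omega) (by omega))
      (humono (i + 1) (i + 2) (by omega) (by omega))
    exact hp_dec i (by omega)
  have hlog : ∀ j, j < k + 3 →
      |log2' (Afun b (u (pt (j + 1))) - Afun b (u (pt j))) - (b (q (k + 2 - j)) + 4)| < 1 := by
    intro j hj
    rw [← hdelta j (by omega)]
    exact afun_log_close hInv (humono j (j + 1) (by omega) (by omega))
  have hrob : (EAux k fun j => log2'
        ((Afun b ∘ u ∘ pt) (k + 3 - j) - (Afun b ∘ u ∘ pt) (k + 2 - j))) ↔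
      EAux k (b ∘ q) := by
    apply rob4 hInv hq_inc
    intro j hj
    have e1 : k + 3 - j = (k + 2 - j) + 1 := by omega
    have e2 : k + 2 - (k + 2 - j) = j := by omega
    rw [e1]
    have := hlog (k + 2 - j) (by omega)
    rw [e2] at this
    exact this
  constructor
  · rintro (⟨hC, _⟩ | ⟨_, hI⟩ | hC)
    · exfalso
      have h0 := hC 0 (by omega)
      have h1 := hd_dec 0 (by omega)
      simp only [Function.comp_apply] at h0
      norm_num at h0 h1
      linarith
    · exact hrob.1 hI
    · exfalso
      have h1 := hd_dec 0 (by omega)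
      simp only [Function.comp_apply] at hC
      have := hC.1
      norm_num at h1 this
      linarith
  · intro h
    right; left
    constructor
    · intro i hi
      have := hd_dec i hi
      simp only [Function.comp_apply]
      exact this
    · exact hrob.2 h
end

theorem av_step {k m n n₀ : ℕ} {b : ℕ → ℝ} (hInv : GInv k b) (hAv : Avoids k b m n₀)
    (hn₀ : 1 ≤ n₀) (hn : 2 * n₀ + k + 12 ≤ n) :
    Avoids (k + 1) (Afun b) (2 ^ m) n := by
  intro u hu hum
  set v : ℕ → ℕ := fun t => dlt (u t) (u (t + 1)) with hv
  have hv_lt : ∀ t, t + 1 < n → v t < m := fun t ht =>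
    dlt_lt_of_lt (Nat.ne_of_lt (hu t ht)) (hum t (by omega)) (hum (t + 1) ht)
  have hv_ne : ∀ t, t + 2 < n → v t ≠ v (t + 1) := fun t ht =>
    dlt_ne (hu t (by omega)) (hu (t + 1) (by omega))
  set M : ℕ := n - (k + 8) with hM
  constructor
  -- ===================== existence of a TRUE subtuple =====================
  · by_contra hct
    push_neg at hct
    -- no peaks of v in the window
    have hnp : ∀ t, t ≤ M → ¬(v t < v (t + 1) ∧ v (t + 2) < v (t + 1)) := by
      rintro t ht ⟨hp1, hp2⟩
      apply hct (fun j => t + j) (fun j hj => by show t + j < t + (j + 1); omega)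
        (by show t + (k + 1 + 2) < n; omega)
      right; right
      constructor
      · simp only [Function.comp_apply]
        norm_num
        have h1 : t + 1 < n := by omega
        have h2 : t + 2 < n := by omega
        exact afun_cmp hInv (hu t h1) (hu (t + 1) h2) hp1
      · simp only [Function.comp_apply]
        have h2 : t + 2 < n := by omega
        have h3 : t + 3 < n := by omega
        exact afun_cmp' hInv (hu (t + 1) h2) (hu (t + 2) h3) hp2
    have hne' : ∀ t, t ≤ M + 1 → v t ≠ v (t + 1) := fun t ht => hv_ne t (by omega)
    obtain ⟨a, haM, hdec, hinc⟩ := exists_flip v M hne' hnp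
    rcases Nat.lt_or_ge a n₀ with hcase | hcase
    · -- increasing run starting at a
      have hrun : ∀ t, a ≤ t → t + 2 ≤ a + n₀ → v t < v (t + 1) := by
        intro t h1 h2
        exact hinc t h1 (by omega)
      obtain ⟨⟨sT, hsT, hsTn, hT⟩, _⟩ := hAv (fun j => v (a + j))
        (fun j hj => by show v (a + j) < v (a + (j + 1)); exact hrun (a + j) (by omega) (by omega))
        (fun j hj => by show v (a + j) < m; exact hv_lt (a + j) (by omega))
      obtain ⟨pt, hpti, hptn, hiff⟩ := inc_case hInv hu a (by omega) hrun sT hsT hsTn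
      exact hct pt (fun j hj => hpti j (by omega)) hptn (hiff.2 hT)
    · -- decreasing run ending at a : use α = a + 1 - n₀
      have hrun : ∀ t, a + 1 - n₀ ≤ t → t + 2 ≤ (a + 1 - n₀) + n₀ → v (t + 1) < v t := by
        intro t h1 h2
        exact hdec t (by omega)
      obtain ⟨⟨sT, hsT, hsTn, hT⟩, _⟩ := hAv (fun j => v ((a + 1 - n₀) + n₀ - 1 - j))
        (fun j hj => by
          show v ((a + 1 - n₀) + n₀ - 1 - j) < v ((a + 1 - n₀) + n₀ - 1 - (j + 1))
          have e1 : (a + 1 - n₀) + n₀ - 1 - (j + 1) = a - 1 - j := by omega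
          have e2 : (a + 1 - n₀) + n₀ - 1 - j = (a - 1 - j) + 1 := by omega
          rw [e1, e2]
          exact hdec (a - 1 - j) (by omega))
        (fun j hj => by
          show v ((a + 1 - n₀) + n₀ - 1 - j) < m
          exact hv_lt _ (by omega))
      obtain ⟨pt, hpti, hptn, hiff⟩ := dec_case hInv hu (a + 1 - n₀) hn₀ (by omega) hrun sT hsT hsTn
      exact hct pt (fun j hj => hpti j (by omega)) hptn (hiff.2 hT)
  -- ===================== existence of a FALSE subtuple =====================
  · by_contra hcf
    push_neg at hcf
    -- no valleys of v in the window
    have hnv : ∀ t, t ≤ M → ¬(v (t + 1) < v t ∧ v (t + 1) < v (t + 2)) := by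
      rintro t ht ⟨hp1, hp2⟩
      have hE := hcf (fun j => t + j) (fun j hj => by show t + j < t + (j + 1); omega)
        (by show t + (k + 1 + 2) < n; omega)
      have hb1 : t + 1 < n := by omega
      have hb2 : t + 2 < n := by omega
      have hb3 : t + 3 < n := by omega
      have hd1 : Afun b (u (t + 1)) - Afun b (u (t + 0)) >
          Afun b (u (t + 2)) - Afun b (u (t + 1)) := by
        have h := afun_cmp' hInv (hu t hb1) (hu (t + 1) hb2) hp1
        simpa using h
      have hd2 : Afun b (u (t + 1)) - Afun b (u (t + 0)) >
          Afun b (u (t + 1 + 1)) - Afun b (u (t + 0 + 1)) := by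
        norm_num at hd1 ⊢
        exact hd1
      have hd3 : Afun b (u (t + 2)) - Afun b (u (t + 1)) <
          Afun b (u (t + 3)) - Afun b (u (t + 2)) := by
        exact afun_cmp hInv (hu (t + 1) hb2) (hu (t + 2) hb3) hp2
      rcases hE with ⟨hC, _⟩ | ⟨hC, _⟩ | hC
      · have h0 := hC 0 (by omega)
        simp only [Function.comp_apply] at h0
        linarith
      · have h0 := hC 1 (by omega)
        simp only [Function.comp_apply] at h0
        have e : Afun b (u (t + 1 + 2)) = Afun b (u (t + 3)) := by norm_num
        rw [e] at h0
        linarith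
      · simp only [Function.comp_apply] at hC
        have h0 := hC.1
        norm_num at h0 hd1
        linarith
    have hvm : ∀ t, t + 1 < n → v t < m := hv_lt
    set w : ℕ → ℕ := fun t => m - v t with hw
    have hne2 : ∀ t, t ≤ M + 1 → w t ≠ w (t + 1) := by
      intro t ht
      have h1 := hv_ne t (by omega)
      have h2 := hvm t (by omega)
      have h3 := hvm (t + 1) (by omega)
      simp only [hw]
      omega
    have hnp2 : ∀ t, t ≤ M → ¬(w t < w (t + 1) ∧ w (t + 2) < w (t + 1)) := by
      rintro t ht ⟨h1, h2⟩
      have h3 := hvm t (by omega)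
      have h4 := hvm (t + 1) (by omega)
      have h5 := hvm (t + 2) (by omega)
      simp only [hw] at h1 h2
      exact hnv t ht ⟨by omega, by omega⟩
    obtain ⟨a, haM, hdec2, hinc2⟩ := exists_flip w M hne2 hnp2
    -- translate back: hdec2 : t < a → v t < v (t+1); hinc2 : a ≤ t ≤ M+1 → v (t+1) < v t
    have hdec2' : ∀ t, t < a → v t < v (t + 1) := by
      intro t ht
      have := hdec2 t ht
      have h3 := hvm t (by omega)
      have h4 := hvm (t + 1) (by omega)
      simp only [hw] at this
      omega
    have hinc2' : ∀ t, a ≤ t → t ≤ M + 1 → v (t + 1) < v t := by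
      intro t h1 h2
      have := hinc2 t h1 h2
      have h3 := hvm t (by omega)
      have h4 := hvm (t + 1) (by omega)
      simp only [hw] at this
      omega
    rcases Nat.lt_or_ge a n₀ with hcase | hcase
    · -- decreasing run starting at a
      have hrun : ∀ t, a ≤ t → t + 2 ≤ a + n₀ → v (t + 1) < v t := by
        intro t h1 h2
        exact hinc2' t h1 (by omega)
      obtain ⟨_, ⟨sF, hsF, hsFn, hF⟩⟩ := hAv (fun j => v (a + n₀ - 1 - j))
        (fun j hj => by
          show v (a + n₀ - 1 - j) < v (a + n₀ - 1 - (j + 1))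
          have e1 : a + n₀ - 1 - (j + 1) = a + n₀ - 2 - j := by omega
          have e2 : a + n₀ - 1 - j = (a + n₀ - 2 - j) + 1 := by omega
          rw [e1, e2]
          exact hrun (a + n₀ - 2 - j) (by omega) (by omega))
        (fun j hj => by
          show v (a + n₀ - 1 - j) < m
          exact hv_lt _ (by omega))
      obtain ⟨pt, hpti, hptn, hiff⟩ := dec_case hInv hu a hn₀ (by omega) hrun sF hsF hsFn
      exact hF (hiff.1 (hcf pt (fun j hj => hpti j (by omega)) hptn))
    · -- increasing run ending at a : α = a + 1 - n₀
      have hrun : ∀ t, a + 1 - n₀ ≤ t → t + 2 ≤ (a + 1 - n₀) + n₀ → v t < v (t + 1) := by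
        intro t h1 h2
        exact hdec2' t (by omega)
      obtain ⟨_, ⟨sF, hsF, hsFn, hF⟩⟩ := hAv (fun j => v ((a + 1 - n₀) + j))
        (fun j hj => by
          show v ((a + 1 - n₀) + j) < v ((a + 1 - n₀) + (j + 1))
          exact hrun ((a + 1 - n₀) + j) (by omega) (by omega))
        (fun j hj => by
          show v ((a + 1 - n₀) + j) < m
          exact hv_lt _ (by omega))
      obtain ⟨pt, hpti, hptn, hiff⟩ := inc_case hInv hu (a + 1 - n₀) (by omega) hrun sF hsF hsFn
      exact hF (hiff.1 (hcf pt (fun j hj => hpti j (by omega)) hptn))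


noncomputable def w4 : ℕ → ℝ := fun t => (4 : ℝ) ^ t

noncomputable def bZero : ℕ → ℝ := fun i => 8 * sumW w4 i + 2

lemma w4_pos : ∀ t, 0 < w4 t := fun t => by unfold w4; positivity

lemma w4_ratio : ∀ t, 4 * w4 t ≤ w4 (t + 1) := by
  intro t
  unfold w4
  rw [pow_succ]
  ring_nf
  exact le_rfl

lemma w4_ge_one : ∀ t, 1 ≤ w4 t := fun t => one_le_pow₀ (by norm_num)

/-- the sign of the triple expression is determined by the delta comparison -/
lemma bzero_triple_pos {x y z : ℕ} (h1 : x < y) (h2 : y < z) (hlt : dlt x y < dlt y z) :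
    4 ≤ bZero x + bZero z - 2 * bZero y := by
  have h := sumW_cmp w4_pos w4_ratio h1 h2 hlt
  have h4 : 4 * w4 (dlt x y) ≤ w4 (dlt y z) := w_ratio_le w4_pos w4_ratio hlt
  have h5 := w4_ge_one (dlt x y)
  unfold bZero
  nlinarith

lemma bzero_triple_neg {x y z : ℕ} (h1 : x < y) (h2 : y < z) (hlt : dlt y z < dlt x y) :
    bZero x + bZero z - 2 * bZero y ≤ -4 := by
  have h := sumW_cmp' w4_pos w4_ratio h1 h2 hlt
  have h4 : 4 * w4 (dlt y z) ≤ w4 (dlt x y) := w_ratio_le w4_pos w4_ratio hlt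
  have h5 := w4_ge_one (dlt y z)
  unfold bZero
  nlinarith

theorem ginv_zero : GInv 0 bZero := by
  refine ⟨?_, ?_, ?_⟩
  · intro i
    have h := (sumW_diff_bounds w4_pos w4_ratio (Nat.lt_succ_self i)).1
    have h5 := w4_ge_one (dlt i (i + 1))
    unfold bZero
    nlinarith
  · norm_num [bZero, sumW]
  · intro q hq y hy
    have hq1 : q 0 < q 1 := hq 0 (by norm_num)
    have hq2 : q 1 < q 2 := hq 1 (by norm_num)
    have hy0 := abs_lt.1 (hy 0 (by norm_num))
    have hy1 := abs_lt.1 (hy 1 (by norm_num))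
    have hy2 := abs_lt.1 (hy 2 (by norm_num))
    have hne := dlt_ne hq1 hq2
    show (0 ≤ y 0 + y 2 - 2 * y 1) ↔ (0 ≤ bZero (q 0) + bZero (q 2) - 2 * bZero (q 1))
    rcases Nat.lt_or_ge (dlt (q 0) (q 1)) (dlt (q 1) (q 2)) with h | h
    · have := bzero_triple_pos hq1 hq2 h
      constructor <;> intro <;> linarith
    · have h' : dlt (q 1) (q 2) < dlt (q 0) (q 1) := lt_of_le_of_ne h (fun e => hne e.symm)
      have := bzero_triple_neg hq1 hq2 h'
      constructor <;> intro hcon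
      · exfalso; linarith
      · exfalso; linarith

theorem av_zero (n : ℕ) (hn : 4 ≤ n) : Avoids 0 bZero (2 ^ (n - 2)) n := by
  intro u hu hum
  set v : ℕ → ℕ := fun t => dlt (u t) (u (t + 1)) with hv
  have hv_lt : ∀ t, t + 1 < n → v t < n - 2 := fun t ht =>
    dlt_lt_of_lt (Nat.ne_of_lt (hu t ht)) (hum t (by omega)) (hum (t + 1) ht)
  have hv_ne : ∀ t, t + 2 < n → v t ≠ v (t + 1) := fun t ht =>
    dlt_ne (hu t (by omega)) (hu (t + 1) (by omega))
  constructor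
  · by_contra hct
    push_neg at hct
    -- all consecutive triples false: v strictly decreasing
    have hdec : ∀ t, t + 2 < n → v (t + 1) < v t := by
      intro t ht
      have h := hct (fun j => t + j) (fun j hj => by show t + j < t + (j + 1); omega)
        (by show t + (0 + 2) < n; omega)
      by_contra hcon
      push_neg at hcon
      have hlt : v t < v (t + 1) := lt_of_le_of_ne hcon (hv_ne t ht)
      apply h
      show 0 ≤ bZero (u (t + 0)) + bZero (u (t + 2)) - 2 * bZero (u (t + 1))
      have e : t + 0 = t := by omega
      rw [e]
      have := bzero_triple_pos (hu t (by omega)) (hu (t + 1) (by omega)) hlt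
      linarith
    exfalso
    have hchain : ∀ j, j + 1 < n → v j + j ≤ v 0 := by
      intro j hj
      induction j with
      | zero => omega
      | succ j ih =>
        have h1 := ih (by omega)
        have h2 := hdec j (by omega)
        omega
    have h1 := hchain (n - 2) (by omega)
    have h2 := hv_lt 0 (by omega)
    omega
  · by_contra hct
    push_neg at hct
    -- all consecutive triples true: v strictly increasing
    have hinc : ∀ t, t + 2 < n → v t < v (t + 1) := by
      intro t ht
      have h := hct (fun j => t + j) (fun j hj => by show t + j < t + (j + 1); omega)
        (by show t + (0 + 2) < n; omega)
      by_contra hcon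
      push_neg at hcon
      have hlt : v (t + 1) < v t := lt_of_le_of_ne hcon (fun e => (hv_ne t ht) e.symm)
      have hneg := bzero_triple_neg (hu t (by omega)) (hu (t + 1) (by omega)) hlt
      have : ¬ (0:ℝ) ≤ bZero (u (t + 0)) + bZero (u (t + 2)) - 2 * bZero (u (t + 1)) := by
        have e : t + 0 = t := by omega
        rw [e]
        linarith
      exact this h
    exfalso
    have hchain : ∀ j, j + 1 < n → j ≤ v j := by
      intro j hj
      induction j with
      | zero => omega
      | succ j ih =>
        have h1 := ih (by omega)
        have h2 := hinc j (by omega)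
        omega
    have h1 := hchain (n - 2) (by omega)
    have h2 := hv_lt (n - 2) (by omega)
    omega


lemma eTower_mono (k : ℕ) {x y : ℝ} (h : x ≤ y) : eTower k x ≤ eTower k y := by
  induction k with
  | zero => exact h
  | succ k ih =>
    show (2:ℝ) ^ (eTower k x) ≤ (2:ℝ) ^ (eTower k y)
    exact Real.rpow_le_rpow_of_exponent_le (by norm_num) ih

theorem main_ind (k : ℕ) : ∃ c : ℝ, 0 < c ∧ ∃ N₀ : ℕ, 4 ≤ N₀ ∧ ∀ n, N₀ ≤ n →
    ∃ (m : ℕ) (b : ℕ → ℝ), GInv k b ∧ Avoids k b m n ∧ eTower (k + 1) (c * n) ≤ (m : ℝ) := by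
  induction k with
  | zero =>
    refine ⟨1/2, by norm_num, 4, le_rfl, ?_⟩
    intro n hn
    refine ⟨2 ^ (n - 2), bZero, ginv_zero, av_zero n hn, ?_⟩
    show (2:ℝ) ^ ((1/2 : ℝ) * (n:ℝ)) ≤ ((2 ^ (n - 2) : ℕ) : ℝ)
    have h1 : ((2 ^ (n - 2) : ℕ) : ℝ) = (2:ℝ) ^ (((n - 2 : ℕ) : ℝ)) := by
      rw [Real.rpow_natCast]
      push_cast
      ring
    rw [h1]
    apply Real.rpow_le_rpow_of_exponent_le (by norm_num)
    have h2 : ((n - 2 : ℕ) : ℝ) = (n : ℝ) - 2 := by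
      have : (2 : ℕ) ≤ n := by omega
      push_cast [Nat.cast_sub this]
      ring
    rw [h2]
    have h3 : (4 : ℝ) ≤ (n : ℝ) := by exact_mod_cast hn
    linarith
  | succ k ih =>
    obtain ⟨c, hc, N₀, hN₀4, hP⟩ := ih
    refine ⟨c / 4, by positivity, 2 * N₀ + 4 * k + 60, by omega, ?_⟩
    intro n hn
    set n₀ : ℕ := (n - (k + 12)) / 2 with hn₀
    have h1 : N₀ ≤ n₀ := by omega
    have h2 : 2 * n₀ + k + 12 ≤ n := by omega
    obtain ⟨m, b, hInv, hAv, hbound⟩ := hP n₀ h1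
    refine ⟨2 ^ m, Afun b, inv_step hInv, av_step hInv hAv (by omega) h2, ?_⟩
    have hx : (c / 4) * (n : ℝ) ≤ c * (n₀ : ℝ) := by
      have h4 : (n : ℝ) ≤ 4 * (n₀ : ℝ) := by
        have : n ≤ 4 * n₀ := by omega
        exact_mod_cast this
      nlinarith
    calc eTower (k + 2) ((c / 4) * n) = (2:ℝ) ^ (eTower (k + 1) ((c / 4) * n)) := rfl
      _ ≤ (2:ℝ) ^ (eTower (k + 1) (c * n₀)) :=
          Real.rpow_le_rpow_of_exponent_le (by norm_num) (eTower_mono _ hx)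
      _ ≤ (2:ℝ) ^ ((m : ℝ)) :=
          Real.rpow_le_rpow_of_exponent_le (by norm_num) hbound
      _ = ((2 ^ m : ℕ) : ℝ) := by
          rw [Real.rpow_natCast]
          push_cast
          ring


/-- For every `k ≥ 3` (here `k + 3`) there is `c > 0` such that for all sufficiently large `n`
there is a sequence of reals of length at least `e_{k-2}(c·n)` with no `E_k`-indiscernible
subsequence of length `n`; consequently any `N` such that every length-`N` sequence contains
an `E_k`-indiscernible subsequence of length `n` satisfies `N ≥ e_{k-2}(c·n)`. -/
theorem erel_ramsey_lower_bound (k : ℕ) :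
    ∃ c : ℝ, 0 < c ∧ ∃ N₀ : ℕ, ∀ n : ℕ, N₀ ≤ n →
      (∃ (m : ℕ) (a : Fin m → ℝ), eTower (k + 1) (c * n) ≤ (m : ℝ) ∧
        ¬ ∃ t : Fin n → Fin m, StrictMono t ∧ IsIndiscernible (ERel k) (a ∘ t)) ∧
      (∀ N : ℕ, (∀ a : Fin N → ℝ,
          ∃ t : Fin n → Fin N, StrictMono t ∧ IsIndiscernible (ERel k) (a ∘ t)) →
        eTower (k + 1) (c * n) ≤ (N : ℝ)) := by
  obtain ⟨c, hc, N₀, hN₀4, hP⟩ := main_ind k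
  refine ⟨c, hc, N₀, ?_⟩
  intro n hn
  obtain ⟨m, b, hInv, hAv, hbound⟩ := hP n hn
  have key : ∀ m' : ℕ, m' ≤ m →
      ¬ ∃ t : Fin n → Fin m', StrictMono t ∧
        IsIndiscernible (ERel k) ((fun i : Fin m' => b i.val) ∘ t) := by
    rintro m' hm' ⟨t, hts, hind⟩
    set u : ℕ → ℕ := fun j => if h : j < n then (t ⟨j, h⟩ : Fin m').val else 0 with hu_def
    have hu : ∀ j, j + 1 < n → u j < u (j + 1) := by
      intro j hj
      simp only [hu_def]
      rw [dif_pos (by omega : j < n), dif_pos hj]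
      exact hts (by exact Fin.mk_lt_mk.2 (by omega))
    have hum : ∀ j, j < n → u j < m := by
      intro j hj
      simp only [hu_def]
      rw [dif_pos hj]
      exact lt_of_lt_of_le (t ⟨j, hj⟩).isLt hm'
    obtain ⟨⟨sT, hsT, hsTn, hT⟩, ⟨sF, hsF, hsFn, hF⟩⟩ := hAv u hu hum
    -- conversion of an abstract subtuple to a Fin-tuple
    have conv : ∀ (s : ℕ → ℕ), (∀ j, j + 1 < k + 3 → s j < s (j + 1)) → s (k + 2) < n →
        ∃ s' : Fin (k + 3) → Fin n, StrictMono s' ∧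
          (ERel k (((fun i : Fin m' => b i.val) ∘ t) ∘ s') ↔ EAux k (b ∘ u ∘ s)) := by
      intro s hs hsn
      have hlt : ∀ j : Fin (k + 3), s j.val < n := by
        intro j
        have := incr_le hs j.val (k + 2) (by omega) (by omega)
        omega
      refine ⟨fun j => ⟨s j.val, hlt j⟩, ?_, ?_⟩
      · intro a b' hab
        exact Fin.mk_lt_mk.2 (incr_lt hs a.val b'.val hab b'.isLt)
      · unfold ERel
        apply eaux_congr
        intro i hi
        rw [dif_pos hi]
        simp only [Function.comp_apply, hu_def]
        rw [dif_pos (hlt ⟨i, hi⟩)]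
    obtain ⟨sT', hsT', hTiff⟩ := conv sT hsT hsTn
    obtain ⟨sF', hsF', hFiff⟩ := conv sF hsF hsFn
    rcases hind with hall | hnone
    · exact hF (hFiff.1 (hall sF' hsF'))
    · exact hnone sT' hsT' (hTiff.2 hT)
  constructor
  · exact ⟨m, fun i => b i.val, hbound, key m le_rfl⟩
  · intro N hN
    by_contra hlt
    push_neg at hlt
    have hNm : N ≤ m := by
      have h1 : (N : ℝ) < (m : ℝ) := lt_of_lt_of_le hlt hbound
      exact_mod_cast le_of_lt h1
    exact key N hNm (hN (fun i => b i.val))
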